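/- Let A → B be a ring homomorphism such that B is finitely generated projective over A, and let M be a B-module. Then fd_B(Hom_A(B, M)) ≤ fd_A(M), assuming additionally that Hom_A(B, A) is projective as a B-module. -/

import Mathlib

/-- Flatness of a left module over a possibly noncommutative ring, via Lambek's criterion:
`M` is flat over `R` iff its character module `Hom_ℤ(M, ℚ/ℤ)` is injective as a right
`R`-module (this is equivalent to exactness of `(-) ⊗_R M`). -/
def IsFlat (R M : Type) [Ring R] [AddCommGroup M] [Module R M] : Prop :=
  Module.Injective Rᵈᵐᵃ (M →+ AddCircle (1 : ℚ))

/-- `flatDimLE R d M` : the flat dimension of `M` over `R` is at most `d`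
(there is a flat resolution of length `≤ d`). -/
def flatDimLE (R : Type) [Ring R] : ℕ → ModuleCat.{0} R → Prop
  | 0, M => IsFlat R M
  | d+1, M => ∃ (F : ModuleCat.{0} R) (g : F →ₗ[R] M),
      IsFlat R F ∧ Function.Surjective g ∧
        flatDimLE R d (ModuleCat.of R (LinearMap.ker g))

/-- Flat dimension at most `d`, for a bare module. -/
def FlatDimLE (R M : Type) [Ring R] [AddCommGroup M] [Module R M] (d : ℕ) : Prop :=
  flatDimLE R d (ModuleCat.of R M)

/-- `projDimLE R d M` : the projective dimension of `M` over `R` is at most `d`. -/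
def projDimLE (R : Type) [Ring R] : ℕ → ModuleCat.{0} R → Prop
  | 0, M => Module.Projective R M
  | d+1, M => ∃ (F : ModuleCat.{0} R) (g : F →ₗ[R] M),
      Module.Projective R F ∧ Function.Surjective g ∧
        projDimLE R d (ModuleCat.of R (LinearMap.ker g))

/-- `R` has finite (left) global dimension: there is a uniform bound on the projective
dimension of all `R`-modules. -/
def HasFiniteGlobalDim (R : Type) [Ring R] : Prop :=
  ∃ g : ℕ, ∀ M : ModuleCat.{0} R, projDimLE R g M

set_option linter.unusedVariables false
attribute [-instance] DomMulAct.instNonAssocSemiringOfMulOpposite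
noncomputable section
open DomMulAct


section Tensor
variable (R : Type) [Ring R]
variable (P : Type) [AddCommGroup P] [Module R P]
variable {K L : Type} [AddCommGroup K] [Module Rᵈᵐᵃ K] [AddCommGroup L] [Module Rᵈᵐᵃ L]

variable (K) in
/-- relations for balanced tensor product `K ⊗_R P` of a right `R`-module and a left one. -/
def relSub : Submodule ℤ (TensorProduct ℤ K P) :=
  Submodule.span ℤ {x | ∃ (r : R) (k : K) (p : P), x = (mk r • k) ⊗ₜ[ℤ] p - k ⊗ₜ[ℤ] (r • p)}

variable (K) in
/-- balanced tensor product of a right `R`-module and a left `R`-module. -/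
abbrev Tw : Type := TensorProduct ℤ K P ⧸ relSub R P K

/-- the canonical bilinear map into `Tw`. -/
def tmulT (k : K) (p : P) : Tw R P K := Submodule.Quotient.mk (k ⊗ₜ[ℤ] p)

lemma tmulT_add_left (k k' : K) (p : P) :
    tmulT R P (k + k') p = tmulT R P k p + tmulT R P k' p := by
  simp [tmulT, TensorProduct.add_tmul]
lemma tmulT_add_right (k : K) (p p' : P) :
    tmulT R P k (p + p') = tmulT R P k p + tmulT R P k p' := by
  simp [tmulT, TensorProduct.tmul_add]
lemma tmulT_rel (r : R) (k : K) (p : P) :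
    tmulT R P (mk r • k) p = tmulT R P k (r • p) := by
  rw [tmulT, tmulT, Submodule.Quotient.eq]
  exact Submodule.subset_span ⟨r, k, p, rfl⟩

lemma Tw.induction_on {motive : Tw R P K → Prop} (t : Tw R P K)
    (zero : motive 0) (tmul : ∀ k p, motive (tmulT R P k p))
    (add : ∀ a b, motive a → motive b → motive (a + b)) : motive t := by
  obtain ⟨x, rfl⟩ := Submodule.mkQ_surjective (relSub R P K) t
  induction x using TensorProduct.induction_on with
  | zero => exact zero
  | tmul k p => exact tmul k p
  | add a b ha hb => exact add _ _ ha hb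

/-- lift an additive balanced bilinear map. -/
def liftT {C : Type} [AddCommGroup C] (φ : K →+ P →+ C)
    (hbal : ∀ (r : R) (k : K) (p : P), φ (mk r • k) p = φ k (r • p)) :
    Tw R P K →+ C := by
  refine ((relSub R P K).liftQ
    ((TensorProduct.liftAddHom φ ?_).toIntLinearMap) ?_).toAddMonoidHom
  · intro z k p
    rw [map_zsmul φ z k, AddMonoidHom.smul_apply, ← map_zsmul (φ k) z p]
  · rw [relSub, Submodule.span_le]
    rintro _ ⟨r, k, p, rfl⟩
    simp [LinearMap.mem_ker, hbal]

@[simp] lemma liftT_tmul {C : Type} [AddCommGroup C] (φ : K →+ P →+ C) (hbal) (k : K) (p : P) :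
    liftT R P φ hbal (tmulT R P k p) = φ k p := rfl

/-- bundled `tmulT` in the second variable -/
def tmulHom (k : K) : P →+ Tw R P K :=
  AddMonoidHom.mk' (fun p => tmulT R P k p) (tmulT_add_right R P k)

/-- functoriality in the right module variable -/
def map₁ (i : L →ₗ[Rᵈᵐᵃ] K) : Tw R P L →+ Tw R P K :=
  liftT R P
    { toFun := fun l => tmulHom R P (i l)
      map_zero' := by ext p; simp [tmulHom, tmulT, map_zero]
      map_add' := fun l l' => by ext p; simp [tmulHom, tmulT, map_add, TensorProduct.add_tmul] }
    (fun r l p => by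
      simp only [AddMonoidHom.coe_mk, ZeroHom.coe_mk, tmulHom, AddMonoidHom.mk'_apply, map_smul]
      exact tmulT_rel R P r (i l) p)

@[simp] lemma map₁_tmul (i : L →ₗ[Rᵈᵐᵃ] K) (l : L) (p : P) :
    map₁ R P i (tmulT R P l p) = tmulT R P (i l) p := rfl

/-- functoriality in the left module variable -/
def map₂ {P' : Type} [AddCommGroup P'] [Module R P'] (h : P →ₗ[R] P') :
    Tw R P K →+ Tw R P' K :=
  liftT R P
    { toFun := fun k => (tmulHom R P' k).comp h.toAddMonoidHom
      map_zero' := by ext p; simp [tmulHom, tmulT, TensorProduct.zero_tmul]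
      map_add' := fun k k' => by ext p; simp [tmulHom, tmulT_add_left] }
    (fun r k p => by
      simp only [AddMonoidHom.coe_mk, ZeroHom.coe_mk, AddMonoidHom.coe_comp,
        LinearMap.toAddMonoidHom_coe, Function.comp_apply, tmulHom, AddMonoidHom.mk'_apply,
        map_smul]
      exact tmulT_rel R P' r k (h p))

@[simp] lemma map₂_tmul {P' : Type} [AddCommGroup P'] [Module R P'] (h : P →ₗ[R] P')
    (k : K) (p : P) : map₂ R P h (tmulT R P k p) = tmulT R P' k (h p) := rfl

end Tensor

section Free
variable (R : Type) [Ring R] (ι : Type)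
variable {K L : Type} [AddCommGroup K] [Module Rᵈᵐᵃ K] [AddCommGroup L] [Module Rᵈᵐᵃ L]

/-- `r ↦ mk r • k` as an additive hom -/
def smulHomK (k : K) : R →+ K where
  toFun r := mk r • k
  map_zero' := by show (mk (0:R) : Rᵈᵐᵃ) • k = 0; rw [show (mk (0:R) : Rᵈᵐᵃ) = 0 from rfl, zero_smul]
  map_add' r r' := by
    show (mk (r+r') : Rᵈᵐᵃ) • k = mk r • k + mk r' • k
    rw [show (mk (r+r') : Rᵈᵐᵃ) = mk r + mk r' from rfl, add_smul]

/-- evaluation of a free balanced tensor, one variable at a time -/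
def eAux (k : K) : (ι →₀ R) →+ (ι →₀ K) :=
  Finsupp.liftAddHom fun q => (Finsupp.singleAddHom q).comp (smulHomK R k)

@[simp] lemma eAux_single (k : K) (q : ι) (r : R) :
    eAux R ι k (Finsupp.single q r) = Finsupp.single q (mk r • k) := by
  rw [eAux, Finsupp.liftAddHom_apply_single]; rfl

/-- evaluation of the balanced tensor with a free module -/
def eT : Tw R (ι →₀ R) K →+ (ι →₀ K) :=
  liftT R (ι →₀ R)
    { toFun := fun k => eAux R ι k
      map_zero' := by
        refine Finsupp.addHom_ext fun q r => ?_
        simp [smul_zero]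
      map_add' := fun k k' => by
        refine Finsupp.addHom_ext fun q r => ?_
        simp [smul_add, Finsupp.single_add] }
    (fun r k g => by
      simp only [AddMonoidHom.coe_mk, ZeroHom.coe_mk]
      have : eAux R ι (mk r • k) =
          (eAux R ι k).comp (DistribSMul.toAddMonoidHom (ι →₀ R) r) := by
        refine Finsupp.addHom_ext fun q c => ?_
        simp only [eAux_single, AddMonoidHom.coe_comp, Function.comp_apply,
          DistribSMul.toAddMonoidHom_apply, Finsupp.smul_single, smul_eq_mul]
        rw [smul_smul, ← mk_mul]
      rw [this]; rfl)

@[simp] lemma eT_tmul (k : K) (g : ι →₀ R) :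
    eT R ι (tmulT R (ι →₀ R) k g) = eAux R ι k g := rfl

/-- section of `eT` -/
def uT : (ι →₀ K) →+ Tw R (ι →₀ R) K :=
  Finsupp.liftAddHom fun q =>
    AddMonoidHom.mk' (fun k => tmulT R (ι →₀ R) k (Finsupp.single q 1))
      (fun k k' => tmulT_add_left R (ι →₀ R) k k' _)

@[simp] lemma uT_single (q : ι) (k : K) :
    uT R ι (Finsupp.single q k) = tmulT R (ι →₀ R) k (Finsupp.single q 1) := by
  rw [uT, Finsupp.liftAddHom_apply_single]; rfl

lemma uT_eT (t : Tw R (ι →₀ R) K) : uT R ι (eT R ι t) = t := by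
  induction t using Tw.induction_on with
  | zero => simp
  | add a b ha hb => simp [ha, hb]
  | tmul k g =>
    rw [eT_tmul]
    have : ((uT R ι).comp (eAux R ι k)) = tmulHom R (ι →₀ R) k := by
      refine Finsupp.addHom_ext fun q r => ?_
      simp only [AddMonoidHom.coe_comp, Function.comp_apply, eAux_single, uT_single,
        tmulHom, AddMonoidHom.mk'_apply]
      rw [tmulT_rel, Finsupp.smul_single, smul_eq_mul, mul_one]
    exact DFunLike.congr_fun this g

lemma eT_injective : Function.Injective (eT R ι (K := K)) := by
  intro t t' h
  rw [← uT_eT R ι t, ← uT_eT R ι t', h]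

lemma eT_natural (i : L →ₗ[Rᵈᵐᵃ] K) (t : Tw R (ι →₀ R) L) :
    eT R ι (map₁ R (ι →₀ R) i t) = Finsupp.mapRange.addMonoidHom i.toAddMonoidHom (eT R ι t) := by
  induction t using Tw.induction_on with
  | zero => simp
  | add a b ha hb => rw [map_add, map_add, ha, hb, ← map_add, ← map_add]
  | tmul l g =>
    rw [map₁_tmul, eT_tmul, eT_tmul]
    have : eAux R ι (i l) = (Finsupp.mapRange.addMonoidHom i.toAddMonoidHom).comp (eAux R ι l) := by
      refine Finsupp.addHom_ext fun q r => ?_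
      simp only [eAux_single, AddMonoidHom.coe_comp, Function.comp_apply,
        Finsupp.mapRange.addMonoidHom_apply, Finsupp.mapRange_single,
        LinearMap.toAddMonoidHom_coe]
      rw [map_smul]
    exact DFunLike.congr_fun this g

lemma map₁_free_injective (i : L →ₗ[Rᵈᵐᵃ] K) (hi : Function.Injective i) :
    Function.Injective (map₁ R (ι →₀ R) i) := by
  intro t t' h
  apply eT_injective R ι
  have h2 := congrArg (eT R ι) h
  rw [eT_natural, eT_natural] at h2
  exact Finsupp.mapRange_injective (⇑i) (map_zero i) hi h2

end Free

section Proj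
variable (R : Type) [Ring R]
variable (P : Type) [AddCommGroup P] [Module R P]
variable {K L : Type} [AddCommGroup K] [Module Rᵈᵐᵃ K] [AddCommGroup L] [Module Rᵈᵐᵃ L]

lemma map₂_map₂ {P' P'' : Type} [AddCommGroup P'] [Module R P'] [AddCommGroup P''] [Module R P'']
    (h : P →ₗ[R] P') (h' : P' →ₗ[R] P'') (t : Tw R P K) :
    map₂ R P' h' (map₂ R P h t) = map₂ R P (h' ∘ₗ h) t := by
  induction t using Tw.induction_on with
  | zero => simp
  | add a b ha hb => simp [ha, hb]
  | tmul k p => simp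

lemma map₁_map₂ {P' : Type} [AddCommGroup P'] [Module R P'] (h : P →ₗ[R] P')
    (i : L →ₗ[Rᵈᵐᵃ] K) (t : Tw R P L) :
    map₁ R P' i (map₂ R P h t) = map₂ R P h (map₁ R P i t) := by
  induction t using Tw.induction_on with
  | zero => simp
  | add a b ha hb => simp [ha, hb]
  | tmul k p => simp

lemma map₁_injective [hP : Module.Projective R P] (i : L →ₗ[Rᵈᵐᵃ] K)
    (hi : Function.Injective i) : Function.Injective (map₁ R P i) := by
  obtain ⟨s, hs⟩ := Module.projective_def.1 hP
  have hsinj : Function.Injective (map₂ R P s : Tw R P L →+ Tw R (P →₀ R) L) := by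
    have hinv : ∀ t : Tw R P L, map₂ R (P →₀ R) (Finsupp.linearCombination R id) (map₂ R P s t) = t := by
      intro t
      rw [map₂_map₂]
      induction t using Tw.induction_on with
      | zero => simp
      | add a b ha hb => simp [ha, hb]
      | tmul k p =>
        rw [map₂_tmul]
        simp only [LinearMap.coe_comp, Function.comp_apply]
        rw [hs p]
    intro t t' h
    rw [← hinv t, ← hinv t', h]
  intro t t' h
  apply hsinj
  apply map₁_free_injective R P i hi
  rw [map₁_map₂, map₁_map₂, h]

end Proj

section SMod
variable (R S : Type) [Ring R] [Ring S]
variable (P : Type) [AddCommGroup P] [Module R P] [Module Sᵈᵐᵃ P] [SMulCommClass R Sᵈᵐᵃ P]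
variable {K L : Type} [AddCommGroup K] [Module Rᵈᵐᵃ K] [AddCommGroup L] [Module Rᵈᵐᵃ L]

/-- the action of `Sᵈᵐᵃ` on the balanced tensor product, through the second factor -/
def smulTw (c : Sᵈᵐᵃ) : Tw R P K →+ Tw R P K :=
  liftT R P
    { toFun := fun k => AddMonoidHom.mk' (fun p => tmulT R P k (c • p))
        (fun p p' => by show tmulT R P k (c • (p + p')) = _; rw [smul_add, tmulT_add_right])
      map_zero' := by
        ext p
        show tmulT R P 0 (c • p) = 0
        simp [tmulT, TensorProduct.zero_tmul]
      map_add' := fun k k' => by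
        ext p
        show tmulT R P (k + k') (c • p) = tmulT R P k (c • p) + tmulT R P k' (c • p)
        rw [tmulT_add_left] }
    (fun r k p => by
      show tmulT R P (mk r • k) (c • p) = tmulT R P k (c • (r • p))
      rw [tmulT_rel, smul_comm])

instance TwSMod : Module Sᵈᵐᵃ (Tw R P K) where
  smul c t := smulTw R S P c t
  one_smul t := by
    show smulTw R S P 1 t = t
    induction t using Tw.induction_on with
    | zero => simp
    | add a b ha hb => rw [map_add, ha, hb]
    | tmul k p => show tmulT R P k ((1 : Sᵈᵐᵃ) • p) = tmulT R P k p; rw [one_smul]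
  mul_smul c c' t := by
    show smulTw R S P (c * c') t = smulTw R S P c (smulTw R S P c' t)
    induction t using Tw.induction_on with
    | zero => simp
    | add a b ha hb => rw [map_add, ha, hb, map_add, map_add]
    | tmul k p =>
      show tmulT R P k ((c * c') • p) = tmulT R P k (c • c' • p)
      rw [mul_smul]
  smul_zero c := map_zero _
  smul_add c a b := map_add _ a b
  add_smul c c' t := by
    show smulTw R S P (c + c') t = smulTw R S P c t + smulTw R S P c' t
    induction t using Tw.induction_on with
    | zero => simp
    | add a b ha hb =>
      rw [map_add, ha, hb, map_add, map_add]
      abel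
    | tmul k p =>
      show tmulT R P k ((c + c') • p) = tmulT R P k (c • p) + tmulT R P k (c' • p)
      rw [add_smul, tmulT_add_right]
  zero_smul t := by
    show smulTw R S P 0 t = 0
    induction t using Tw.induction_on with
    | zero => simp
    | add a b ha hb => rw [map_add, ha, hb, add_zero]
    | tmul k p =>
      show tmulT R P k ((0 : Sᵈᵐᵃ) • p) = 0
      rw [zero_smul, tmulT, TensorProduct.tmul_zero, Submodule.Quotient.mk_zero]

lemma smulTw_tmul (c : Sᵈᵐᵃ) (k : K) (p : P) :
    c • tmulT R P k p = tmulT R P k (c • p) := rfl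

lemma map₁_smulS (i : L →ₗ[Rᵈᵐᵃ] K) (c : Sᵈᵐᵃ) (t : Tw R P L) :
    map₁ R P i (c • t) = c • map₁ R P i t := by
  induction t using Tw.induction_on with
  | zero => simp
  | add a b ha hb => rw [smul_add, map_add, ha, hb, map_add, smul_add]
  | tmul k p => rw [smulTw_tmul, map₁_tmul, map₁_tmul, smulTw_tmul]

/-- scalar action as an `Sᵈᵐᵃ`-linear endomorphism -/
def smulPmap (r : R) : P →ₗ[Sᵈᵐᵃ] P where
  toFun := (r • ·)
  map_add' := smul_add r
  map_smul' c p := by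
    show r • (c • p) = c • (r • p)
    exact smul_comm r c p

variable (Q : Type) [AddCommGroup Q] [Module Sᵈᵐᵃ Q]

instance lmapDomAct : Module Rᵈᵐᵃ (P →ₗ[Sᵈᵐᵃ] Q) where
  smul c φ := φ ∘ₗ smulPmap R S P (mk.symm c)
  one_smul φ := LinearMap.ext fun p => by
    show φ (mk.symm (1 : Rᵈᵐᵃ) • p) = φ p
    rw [show mk.symm (1 : Rᵈᵐᵃ) = (1 : R) from rfl, one_smul]
  mul_smul c c' φ := LinearMap.ext fun p => by
    show φ (mk.symm (c * c') • p) = φ (mk.symm c' • mk.symm c • p)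
    rw [symm_mk_mul, mul_smul]
  smul_zero c := rfl
  smul_add c φ φ' := rfl
  add_smul c c' φ := LinearMap.ext fun p => by
    show φ (mk.symm (c + c') • p) = φ (mk.symm c • p) + φ (mk.symm c' • p)
    rw [show mk.symm (c + c') = mk.symm c + mk.symm c' from rfl, add_smul, map_add]
  zero_smul φ := LinearMap.ext fun p => by
    show φ (mk.symm (0 : Rᵈᵐᵃ) • p) = 0
    rw [show mk.symm (0 : Rᵈᵐᵃ) = (0 : R) from rfl, zero_smul, map_zero]

lemma smul_lmap_apply (c : Rᵈᵐᵃ) (φ : P →ₗ[Sᵈᵐᵃ] Q) (p : P) :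
    (c • φ) p = φ (mk.symm c • p) := rfl

lemma mk_smul_lmap_apply (r : R) (φ : P →ₗ[Sᵈᵐᵃ] Q) (p : P) :
    (mk r • φ) p = φ (r • p) := rfl

/-- the key step : `Hom_{S}(P, Q)` is an injective right `R`-module whenever `Q` is an
injective right `S`-module and `P` is a projective left `R`-module (compatible actions). -/
theorem hom_injective [Module.Projective R P] (hQ : Module.Injective Sᵈᵐᵃ Q) :
    Module.Injective Rᵈᵐᵃ (P →ₗ[Sᵈᵐᵃ] Q) := by
  constructor
  intro X Y _ _ _ _ i hi ψ
  have bal : ∀ (r : R) (x : X) (p : P), ψ (mk r • x) p = ψ x (r • p) := fun r x p => by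
    rw [map_smul, mk_smul_lmap_apply]
  let χX : Tw R P X →ₗ[Sᵈᵐᵃ] Q :=
    { toFun := liftT R P
        { toFun := fun x => (ψ x).toAddMonoidHom
          map_zero' := by ext p; simp
          map_add' := fun x x' => by ext p; simp }
        (fun r x p => bal r x p)
      map_add' := map_add _
      map_smul' := fun c t => by
        simp only [RingHom.id_apply]
        induction t using Tw.induction_on with
        | zero => rw [smul_zero, map_zero, smul_zero]
        | add a b ha hb => rw [smul_add, map_add, ha, hb, map_add, smul_add]
        | tmul k p =>
          rw [smulTw_tmul]
          exact map_smul (ψ k) c p }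
  let Θ : Tw R P X →ₗ[Sᵈᵐᵃ] Tw R P Y :=
    { toFun := map₁ R P i
      map_add' := map_add _
      map_smul' := fun c t => map₁_smulS R S P i c t }
  obtain ⟨χY, hχ⟩ := hQ.out Θ (map₁_injective R P i hi) χX
  refine ⟨{ toFun := fun y =>
              { toFun := fun p => χY (tmulT R P y p)
                map_add' := fun p p' => by
                  show χY (tmulT R P y (p + p')) = χY (tmulT R P y p) + χY (tmulT R P y p')
                  rw [tmulT_add_right, map_add]
                map_smul' := fun c p => by
                  show χY (tmulT R P y (c • p)) = c • χY (tmulT R P y p)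
                  rw [← smulTw_tmul, map_smul] }
            map_add' := fun y y' => LinearMap.ext fun p => by
              show χY (tmulT R P (y + y') p) = χY (tmulT R P y p) + χY (tmulT R P y' p)
              rw [tmulT_add_left, map_add]
            map_smul' := fun c y => LinearMap.ext fun p => by
              show χY (tmulT R P (c • y) p) = χY (tmulT R P y (mk.symm c • p))
              rw [show c • y = mk (mk.symm c) • y from by rw [mk.apply_symm_apply], tmulT_rel] },
    fun x => LinearMap.ext fun p => ?_⟩
  show χY (tmulT R P (i x) p) = ψ x p
  rw [show tmulT R P (i x) p = Θ (tmulT R P x p) from rfl, hχ]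
  rfl
end SMod

section Helpers

theorem injective_of_lequiv {R Q Q' : Type} [Ring R] [AddCommGroup Q] [AddCommGroup Q']
    [Module R Q] [Module R Q'] (e : Q ≃ₗ[R] Q') (h : Module.Injective R Q) :
    Module.Injective R Q' := by
  constructor
  intro X Y _ _ _ _ i hi g
  obtain ⟨h', hh⟩ := h.out i hi ((e.symm : Q' →ₗ[R] Q) ∘ₗ g)
  refine ⟨(e : Q →ₗ[R] Q') ∘ₗ h', fun x => ?_⟩
  have := hh x
  simp only [LinearMap.comp_apply] at this ⊢
  rw [this]; exact e.apply_symm_apply _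

/-- precomposition with a linear equivalence, on character modules -/
def charCongr {R X Y : Type} [Ring R] [AddCommGroup X] [AddCommGroup Y] [Module R X] [Module R Y]
    (e : X ≃ₗ[R] Y) : (Y →+ AddCircle (1:ℚ)) ≃ₗ[Rᵈᵐᵃ] (X →+ AddCircle (1:ℚ)) where
  toFun c := c.comp e.toLinearMap.toAddMonoidHom
  invFun c := c.comp e.symm.toLinearMap.toAddMonoidHom
  left_inv c := by ext y; simp
  right_inv c := by ext x; simp
  map_add' c c' := by ext x; rfl
  map_smul' r c := by
    ext x
    show c (DomMulAct.mk.symm r • e x) = c (e (DomMulAct.mk.symm r • x))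
    exact congrArg c (e.map_smul (DomMulAct.mk.symm r) x).symm

theorem isFlat_of_lequiv {R X Y : Type} [Ring R] [AddCommGroup X] [AddCommGroup Y] [Module R X]
    [Module R Y] (e : X ≃ₗ[R] Y) (h : IsFlat R X) : IsFlat R Y :=
  injective_of_lequiv (charCongr e.symm) h

theorem flatDimLE_of_lequiv {R : Type} [Ring R] (d : ℕ) :
    ∀ (X Y : ModuleCat.{0} R) (e : X ≃ₗ[R] Y), flatDimLE R d X → flatDimLE R d Y := by
  induction d with
  | zero => exact fun X Y e h => isFlat_of_lequiv e h
  | succ d ih =>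
    rintro X Y e ⟨F, g, hF, hs, hk⟩
    refine ⟨F, e.toLinearMap ∘ₗ g, hF, ?_, ?_⟩
    · intro y
      obtain ⟨v, hv⟩ := hs (e.symm y)
      exact ⟨v, by simp [hv]⟩
    · have hker : LinearMap.ker (e.toLinearMap ∘ₗ g) = LinearMap.ker g := by
        rw [LinearMap.ker_comp, LinearEquiv.ker, Submodule.comap_bot]
      exact ih _ _ (LinearEquiv.ofEq _ _ hker.symm) hk

theorem flatDimLE_inst_transfer {R X : Type} [Ring R] [AddCommGroup X] {i1 i2 : Module R X}
    (h : i1 = i2) (d : ℕ) (hf : @FlatDimLE R X _ _ i1 d) : @FlatDimLE R X _ _ i2 d := by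
  cases h; exact hf

theorem projective_inst_transfer {R X : Type} [Ring R] [AddCommGroup X] {i1 i2 : Module R X}
    (h : i1 = i2) (hf : @Module.Projective R _ X _ i1) : @Module.Projective R _ X _ i2 := by
  cases h; exact hf

end Helpers

section AB
variable {A B : Type} [Ring A] [Ring B] (f : A →+* B)
variable [Module A B] (hAB : ∀ (a : A) (b : B), a • b = f a * b)

/-- right multiplication by `b` is `A`-linear -/
def rmulMap (b : B) : B →ₗ[A] B where
  toFun x := x * b
  map_add' x y := add_mul x y b
  map_smul' a x := by
    simp only [RingHom.id_apply]
    rw [hAB, hAB, mul_assoc]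

/-- the `B`-module structure on `Hom_A(B, N)`, via `(b • h) x = h (x * b)` -/
def homMod (N : Type) [AddCommGroup N] [Module A N] : Module B (B →ₗ[A] N) where
  smul b h := h ∘ₗ rmulMap f hAB b
  one_smul h := LinearMap.ext fun x => by show h (x * 1) = h x; rw [mul_one]
  mul_smul b c h := LinearMap.ext fun x => by
    show h (x * (b * c)) = h (x * b * c)
    rw [mul_assoc]
  smul_zero b := rfl
  smul_add b h h' := rfl
  add_smul b c h := LinearMap.ext fun x => by
    show h (x * (b + c)) = h (x * b) + h (x * c)
    rw [mul_add, map_add]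
  zero_smul h := LinearMap.ext fun x => by show h (x * 0) = 0; rw [mul_zero, map_zero]

/-- left multiplication (in the opposite sense) by `a` on the codomain is `A`-linear -/
def lmulA (a : A) : A →ₗ[A] A where
  toFun y := y * a
  map_add' x y := add_mul x y a
  map_smul' a' y := by
    simp only [RingHom.id_apply, smul_eq_mul]
    rw [mul_assoc]

/-- the right `A`-module structure on `P = Hom_A(B, A)`, via `(c • p) x = p x * c` -/
instance dualDomAct : Module Aᵈᵐᵃ (B →ₗ[A] A) where
  smul c p := lmulA (mk.symm c) ∘ₗ p
  one_smul p := LinearMap.ext fun x => by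
    show p x * mk.symm (1 : Aᵈᵐᵃ) = p x
    rw [show mk.symm (1 : Aᵈᵐᵃ) = (1:A) from rfl, mul_one]
  mul_smul c c' p := LinearMap.ext fun x => by
    show p x * mk.symm (c * c') = (p x * mk.symm c') * mk.symm c
    rw [symm_mk_mul, mul_assoc]
  smul_zero c := LinearMap.ext fun x => zero_mul _
  smul_add c p p' := LinearMap.ext fun x => add_mul _ _ _
  add_smul c c' p := LinearMap.ext fun x => by
    show p x * mk.symm (c + c') = p x * mk.symm c + p x * mk.symm c'
    rw [show mk.symm (c + c') = mk.symm c + mk.symm c' from rfl, mul_add]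
  zero_smul p := LinearMap.ext fun x => mul_zero _

lemma dualDomAct_smul_apply (c : Aᵈᵐᵃ) (p : B →ₗ[A] A) (x : B) :
    (c • p) x = p x * mk.symm c := rfl

lemma smulCommBA (N : Type) [AddCommGroup N] [Module A N] :
    letI := homMod f hAB A
    SMulCommClass B Aᵈᵐᵃ (B →ₗ[A] A) := by
  letI := homMod f hAB A
  exact ⟨fun b c p => LinearMap.ext fun x => rfl⟩

/-- dual basis for a finite projective module -/
lemma exists_dual_basis (hfin : Module.Finite A B) (hproj : Module.Projective A B) :
    ∃ (n : ℕ) (x : Fin n → B) (fb : Fin n → (B →ₗ[A] A)),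
      ∀ y : B, ∑ i, fb i y • x i = y := by
  obtain ⟨n, x, hx⟩ := Module.Finite.exists_fin (R := A) (M := B)
  let π : (Fin n → A) →ₗ[A] B :=
    { toFun := fun c => ∑ i, c i • x i
      map_add' := fun c c' => by
        simp only [Pi.add_apply, add_smul]
        rw [Finset.sum_add_distrib]
      map_smul' := fun a c => by
        simp only [RingHom.id_apply, Pi.smul_apply, smul_eq_mul]
        rw [Finset.smul_sum]
        exact Finset.sum_congr rfl fun i _ => (mul_smul a (c i) (x i)) }
  have hπ : Function.Surjective π := by
    rw [← LinearMap.range_eq_top, ← top_le_iff, ← hx, Submodule.span_le]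
    rintro _ ⟨i, rfl⟩
    refine ⟨Pi.single i 1, ?_⟩
    show π (Pi.single i 1) = x i
    simp only [π, LinearMap.coe_mk, AddHom.coe_mk]
    rw [Finset.sum_eq_single i (fun j _ hj => by rw [Pi.single_eq_of_ne hj, zero_smul])
      (fun h => absurd (Finset.mem_univ i) h)]
    rw [Pi.single_eq_same, one_smul]
  obtain ⟨σ, hσ⟩ := Module.projective_lifting_property (h := hproj) π LinearMap.id hπ
  refine ⟨n, x, fun i => (LinearMap.proj i) ∘ₗ σ, fun y => ?_⟩
  have := congrArg (fun (g : B →ₗ[A] B) => g y) hσ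
  simpa [π] using this

end AB

section AB2
variable {A B : Type} [Ring A] [Ring B] (f : A →+* B)
variable [Module A B] (hAB : ∀ (a : A) (b : B), a • b = f a * b)

/-- `y ↦ p y • n` as an `A`-linear map `B →ₗ[A] N`. -/
def hpn (N : Type) [AddCommGroup N] [Module A N] (p : B →ₗ[A] A) (nn : N) : B →ₗ[A] N where
  toFun y := p y • nn
  map_add' y y' := by
    show p (y + y') • nn = p y • nn + p y' • nn
    rw [map_add, add_smul]
  map_smul' a y := by
    simp only [RingHom.id_apply]
    rw [map_smul, smul_eq_mul, mul_smul]

theorem isFlat_hom (hfin : Module.Finite A B) (hproj : Module.Projective A B)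
    (hdualproj : letI := homMod f hAB A; Module.Projective B (B →ₗ[A] A))
    (N : Type) [AddCommGroup N] [Module A N] (hN : IsFlat A N) :
    letI := homMod f hAB N
    IsFlat B (B →ₗ[A] N) := by
  letI := homMod f hAB A
  letI := homMod f hAB N
  haveI : SMulCommClass B Aᵈᵐᵃ (B →ₗ[A] A) := smulCommBA f hAB A
  haveI : Module.Projective B (B →ₗ[A] A) := hdualproj
  have hZ : Module.Injective Bᵈᵐᵃ ((B →ₗ[A] A) →ₗ[Aᵈᵐᵃ] (N →+ AddCircle (1:ℚ))) :=
    hom_injective B A (B →ₗ[A] A) (N →+ AddCircle (1:ℚ)) hN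
  obtain ⟨n, x, fb, hdb⟩ := exists_dual_basis hfin hproj
  -- (∗) every `p` is a combination of the dual basis
  have hp : ∀ p : B →ₗ[A] A, (∑ i, mk (p (x i)) • fb i) = p := by
    intro p
    refine LinearMap.ext fun y => ?_
    rw [LinearMap.sum_apply]
    have : ∀ i, (mk (p (x i)) • fb i) y = fb i y * p (x i) := fun i => rfl
    rw [Finset.sum_congr rfl fun i _ => this i]
    conv_rhs => rw [← hdb y, map_sum]
    exact (Finset.sum_congr rfl fun i _ => by rw [map_smul, smul_eq_mul]).symm
  -- (∗∗) evaluation of φ through the dual basis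
  have key : ∀ (φ : (B →ₗ[A] A) →ₗ[Aᵈᵐᵃ] (N →+ AddCircle (1:ℚ))) (p : B →ₗ[A] A) (nn : N),
      φ p nn = ∑ i, φ (fb i) (p (x i) • nn) := by
    intro φ p nn
    conv_lhs => rw [← hp p, map_sum, AddMonoidHom.finset_sum_apply]
    refine Finset.sum_congr rfl fun i _ => ?_
    rw [map_smul]
    rfl
  have keyB : ∀ (φ : (B →ₗ[A] A) →ₗ[Aᵈᵐᵃ] (N →+ AddCircle (1:ℚ))) (b : B) (h : B →ₗ[A] N),
      (∑ i, φ (b • fb i) (h (x i))) = ∑ j, φ (fb j) (h (x j * b)) := by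
    intro φ b h
    have lhs : ∀ i, φ (b • fb i) (h (x i)) = ∑ j, φ (fb j) (fb i (x j * b) • h (x i)) :=
      fun i => key φ (b • fb i) (h (x i))
    rw [Finset.sum_congr rfl fun i _ => lhs i]
    have rhs : ∀ j, φ (fb j) (h (x j * b)) = ∑ i, φ (fb j) (fb i (x j * b) • h (x i)) := by
      intro j
      conv_lhs => rw [← hdb (x j * b), map_sum]
      rw [map_sum]
      exact Finset.sum_congr rfl fun i _ => by rw [map_smul]
    rw [Finset.sum_congr rfl fun j _ => rhs j]
    exact Finset.sum_comm
  show Module.Injective Bᵈᵐᵃ ((B →ₗ[A] N) →+ AddCircle (1:ℚ))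
  refine injective_of_lequiv ?_ hZ
  refine
    { toFun := fun φ =>
        { toFun := fun h => ∑ i, φ (fb i) (h (x i))
          map_zero' := by simp
          map_add' := fun h h' => by
            simp only [LinearMap.add_apply, map_add]
            rw [Finset.sum_add_distrib] }
      invFun := fun χ =>
        { toFun := fun p =>
            { toFun := fun nn => χ (hpn N p nn)
              map_zero' := by
                show χ (hpn N p 0) = 0
                rw [show hpn N p 0 = 0 from LinearMap.ext fun y => smul_zero _, map_zero]
              map_add' := fun nn nn' => by
                show χ (hpn N p (nn + nn')) = χ (hpn N p nn) + χ (hpn N p nn')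
                rw [show hpn N p (nn + nn') = hpn N p nn + hpn N p nn' from
                  LinearMap.ext fun y => smul_add _ _ _, map_add] }
          map_add' := fun p p' => AddMonoidHom.ext fun nn => by
            show χ (hpn N (p + p') nn) = χ (hpn N p nn) + χ (hpn N p' nn)
            rw [show hpn N (p + p') nn = hpn N p nn + hpn N p' nn from
              LinearMap.ext fun y => by
                show ((p + p') y) • nn = p y • nn + p' y • nn
                rw [LinearMap.add_apply, add_smul], map_add]
          map_smul' := fun c p => AddMonoidHom.ext fun nn => by
            show χ (hpn N (c • p) nn) = χ (hpn N p (mk.symm c • nn))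
            congr 1
            exact LinearMap.ext fun y => by
              show (p y * mk.symm c) • nn = p y • (mk.symm c • nn)
              rw [mul_smul] }
      left_inv := fun φ => LinearMap.ext fun p => AddMonoidHom.ext fun nn => (key φ p nn).symm
      right_inv := fun χ => AddMonoidHom.ext fun h => ?_
      map_add' := fun φ φ' => AddMonoidHom.ext fun h => by
        show (∑ i, (φ + φ') (fb i) (h (x i))) = _
        simp only [LinearMap.add_apply, AddMonoidHom.add_apply]
        rw [Finset.sum_add_distrib]
        rfl
      map_smul' := fun c φ => AddMonoidHom.ext fun h => by
        show (∑ i, φ (mk.symm c • fb i) (h (x i))) = ∑ j, φ (fb j) (h (x j * mk.symm c))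
        exact keyB φ (mk.symm c) h }
  show (∑ i, χ (hpn N (fb i) (h (x i)))) = χ h
  rw [← map_sum]
  congr 1
  refine LinearMap.ext fun y => ?_
  rw [LinearMap.sum_apply]
  have : ∀ i, hpn N (fb i) (h (x i)) y = fb i y • h (x i) := fun i => rfl
  rw [Finset.sum_congr rfl fun i _ => this i]
  conv_rhs => rw [← hdb y, map_sum]
  exact Finset.sum_congr rfl fun i _ => by rw [map_smul]

end AB2

section AB3
variable {A B : Type} [Ring A] [Ring B] (f : A →+* B)
variable [Module A B] (hAB : ∀ (a : A) (b : B), a • b = f a * b)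

theorem hom_flatDim (hfin : Module.Finite A B) (hproj : Module.Projective A B)
    (hdualproj : letI := homMod f hAB A; Module.Projective B (B →ₗ[A] A)) (d : ℕ) :
    ∀ (N : Type) [AddCommGroup N] [Module A N], FlatDimLE A N d →
      letI := homMod f hAB N
      FlatDimLE B (B →ₗ[A] N) d := by
  induction d with
  | zero =>
    intro N _ _ hfd
    letI := homMod f hAB N
    have h0 : IsFlat A N := hfd
    show flatDimLE B 0 (ModuleCat.of B (B →ₗ[A] N))
    show IsFlat B (B →ₗ[A] N)
    exact isFlat_hom f hAB hfin hproj hdualproj N h0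
  | succ d ih =>
    intro N _ _ hfd
    letI := homMod f hAB N
    obtain ⟨F, g, hF, hs, hk⟩ := (hfd : flatDimLE A (d+1) (ModuleCat.of A N))
    letI := homMod f hAB F
    let g' : (B →ₗ[A] F) →ₗ[B] (B →ₗ[A] N) :=
      { toFun := fun h => (g : F →ₗ[A] N) ∘ₗ h
        map_add' := fun h h' => LinearMap.ext fun y => map_add g _ _
        map_smul' := fun b h => LinearMap.ext fun y => rfl }
    have hsurj : Function.Surjective g' := by
      intro h
      obtain ⟨h', hh'⟩ := Module.projective_lifting_property (h := hproj)
        (g : F →ₗ[A] N) h hs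
      exact ⟨h', hh'⟩
    have hflat : IsFlat B (B →ₗ[A] F) := isFlat_hom f hAB hfin hproj hdualproj F hF
    -- kernel identification
    letI := homMod f hAB (LinearMap.ker g)
    have IH := ih (LinearMap.ker g) hk
    let e : (B →ₗ[A] (LinearMap.ker g)) ≃ₗ[B] (LinearMap.ker g') :=
      { toFun := fun k => ⟨(LinearMap.ker g).subtype ∘ₗ k, by
          show (g : F →ₗ[A] N) ∘ₗ ((LinearMap.ker g).subtype ∘ₗ k) = 0
          exact LinearMap.ext fun y => (k y).2⟩
        invFun := fun w => LinearMap.codRestrict (LinearMap.ker g) w.1 (fun y => by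
          have := w.2
          rw [LinearMap.mem_ker] at this
          exact LinearMap.congr_fun this y)
        map_add' := fun k k' => rfl
        map_smul' := fun b k => rfl
        left_inv := fun k => LinearMap.ext fun y => Subtype.ext rfl
        right_inv := fun w => Subtype.ext (LinearMap.ext fun y => rfl) }
    refine ⟨ModuleCat.of B (B →ₗ[A] F), g', hflat, hsurj, ?_⟩
    exact flatDimLE_of_lequiv d _ _ e IH

end AB3



end

/-- Let `A → B` be a ring homomorphism such that `B` is finitely generated projective over `A`
and `Hom_A(B, A)` is projective as a `B`-module. Then for every `B`-module `M`,
`fd_B (Hom_A(B, M)) ≤ fd_A M`, where `Hom_A(B, M)` carries the `B`-module structure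
`(b • h) x = h (x * b)` and `M` is an `A`-module by restriction of scalars. -/
theorem stmt16 (A B : Type) [Ring A] [Ring B] (f : A →+* B)
    [Module A B] (hAB : ∀ (a : A) (b : B), a • b = f a * b)
    (hfin : Module.Finite A B) (hproj : Module.Projective A B)
    [Module B (B →ₗ[A] A)]
    (hdual : ∀ (b : B) (h : B →ₗ[A] A) (x : B), (b • h) x = h (x * b))
    (hdualproj : Module.Projective B (B →ₗ[A] A))
    (M : Type) [AddCommGroup M] [Module B M] [Module A M]
    (hM : ∀ (a : A) (m : M), a • m = f a • m)
    [Module B (B →ₗ[A] M)]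
    (hdualM : ∀ (b : B) (h : B →ₗ[A] M) (x : B), (b • h) x = h (x * b))
    (d : ℕ) (hfd : FlatDimLE A M d) :
    FlatDimLE B (B →ₗ[A] M) d := by
  have hA : (homMod f hAB A : Module B (B →ₗ[A] A)) = ‹Module B (B →ₗ[A] A)› :=
    Module.ext' _ _ fun b h => LinearMap.ext fun x => by rw [hdual b h x]; rfl
  have hMi : (homMod f hAB M : Module B (B →ₗ[A] M)) = ‹Module B (B →ₗ[A] M)› :=
    Module.ext' _ _ fun b h => LinearMap.ext fun x => by rw [hdualM b h x]; rfl
  have hdualproj' : letI := homMod f hAB A; Module.Projective B (B →ₗ[A] A) :=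
    projective_inst_transfer hA.symm hdualproj
  have main := hom_flatDim f hAB hfin hproj hdualproj' d M hfd
  exact flatDimLE_inst_transfer hMi d main
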